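/- Let a ∈ ℝ, b ∈ ℝ with b ≠ 0, k > 0, α ∈ (0,1), and let x_d : [0,∞) → ℝ be continuously differentiable. Let x : [0,∞) → ℝ be differentiable satisfying x'(t) = a·x(t) + b·u(t) where u(t) = (1/b)·(-a·x(t) - k·sign(x(t) - x_d(t))·|x(t) - x_d(t)|^α + x_d'(t)). Then x(t) = x_d(t) for all t ≥ |x(0) - x_d(0)|^(1-α)/(k·(1-α)). -/

import Mathlib

open Set

/-- Auxiliary: a positive function on `[0,T]` satisfying `f' = -k f^α` with
`f 0 ^ (1-α) = k (1-α) T` cannot stay positive up to time `T`. -/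
lemma stmt_13_aux (k α T : ℝ) (hk : 0 < k) (hα0 : 0 < α) (hα1 : α < 1) (hT : 0 < T)
    (f : ℝ → ℝ)
    (hf : ∀ s ∈ Icc (0:ℝ) T, HasDerivAt f (-(k * f s ^ α)) s)
    (hfpos : ∀ s ∈ Icc (0:ℝ) T, 0 < f s)
    (hf0 : f 0 ^ (1 - α) = k * (1 - α) * T) : False := by
  have h1α : 0 < 1 - α := by linarith
  set W : ℝ → ℝ := fun s => f s ^ (1 - α) + k * (1 - α) * s with hW
  have hWd : ∀ s ∈ Ioo (0:ℝ) T, HasDerivAt W 0 s := by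
    intro s hs
    have hsIcc : s ∈ Icc (0:ℝ) T := ⟨hs.1.le, hs.2.le⟩
    have hfs := hfpos s hsIcc
    have h1 : HasDerivAt (fun s => f s ^ (1 - α))
        ((-(k * f s ^ α)) * (1 - α) * f s ^ (1 - α - 1)) s :=
      (hf s hsIcc).rpow_const (Or.inl hfs.ne')
    have h2 : HasDerivAt (fun s => k * (1 - α) * s) (k * (1 - α)) s := by
      simpa using (hasDerivAt_id s).const_mul (k * (1 - α))
    have h3 := h1.add h2
    have key : (-(k * f s ^ α)) * (1 - α) * f s ^ (1 - α - 1) + k * (1 - α) = 0 := by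
      have : f s ^ (1 - α - 1) * f s ^ α = 1 := by
        rw [← Real.rpow_add hfs]
        norm_num
      linear_combination (-(k * (1 - α))) * this
    rwa [key] at h3
  have hWc : ContinuousOn W (Icc 0 T) := by
    intro s hs
    exact ((hf s hs).continuousAt.rpow_const (Or.inl (hfpos s hs).ne')
      |>.add (by fun_prop)).continuousWithinAt
  have hint : interior (Icc (0:ℝ) T) = Ioo 0 T := interior_Icc
  have hdiff : DifferentiableOn ℝ W (interior (Icc (0:ℝ) T)) := by
    rw [hint]; intro s hs; exact ((hWd s hs).differentiableAt).differentiableWithinAt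
  have hderiv : ∀ s ∈ interior (Icc (0:ℝ) T), deriv W s = 0 := by
    rw [hint]; intro s hs; exact (hWd s hs).deriv
  have hmono : MonotoneOn W (Icc 0 T) :=
    monotoneOn_of_deriv_nonneg (convex_Icc 0 T) hWc hdiff
      (fun s hs => (hderiv s hs).ge)
  have hanti : AntitoneOn W (Icc 0 T) :=
    antitoneOn_of_deriv_nonpos (convex_Icc 0 T) hWc hdiff
      (fun s hs => (hderiv s hs).le)
  have h0m : (0:ℝ) ∈ Icc (0:ℝ) T := ⟨le_rfl, hT.le⟩
  have hTm : T ∈ Icc (0:ℝ) T := ⟨hT.le, le_rfl⟩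
  have heq : W T = W 0 :=
    le_antisymm (hanti h0m hTm hT.le) (hmono h0m hTm hT.le)
  have hfT : 0 < f T ^ (1 - α) := Real.rpow_pos_of_pos (hfpos T hTm) _
  simp only [hW] at heq
  rw [hf0] at heq
  nlinarith [hfT]

/-- Finite-time tracking for the scalar system `ẋ = a·x + b·u` with feedback
`u = (1/b)(-a·x - k·sign(x-x_d)·|x-x_d|^α + ẋ_d)`: the state reaches the C¹
reference `x_d` by time `|x(0)-x_d(0)|^(1-α)/(k(1-α))`. -/
theorem stmt_13 (a b k α : ℝ) (hb : b ≠ 0) (hk : 0 < k) (hα0 : 0 < α) (hα1 : α < 1)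
    (xd : ℝ → ℝ) (hxd : ContDiff ℝ 1 xd)
    (x u : ℝ → ℝ)
    (hu : ∀ t, 0 ≤ t → u t = (1 / b) *
      (-a * x t - k * Real.sign (x t - xd t) * |x t - xd t| ^ α + deriv xd t))
    (hx : ∀ t, 0 ≤ t → HasDerivAt x (a * x t + b * u t) t) :
    ∀ t, |x 0 - xd 0| ^ (1 - α) / (k * (1 - α)) ≤ t → x t = xd t := by
  intro t ht
  have h1α : 0 < 1 - α := by linarith
  have hkα : 0 < k * (1 - α) := by positivity
  set T : ℝ := |x 0 - xd 0| ^ (1 - α) / (k * (1 - α)) with hTdef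
  have hT0 : 0 ≤ T := by positivity
  have ht0 : 0 ≤ t := le_trans hT0 ht
  set e : ℝ → ℝ := fun s => x s - xd s with he_def
  have hxd' : ∀ s : ℝ, HasDerivAt xd (deriv xd s) s :=
    fun s => ((hxd.differentiable one_ne_zero) s).hasDerivAt
  have he : ∀ s, 0 ≤ s → HasDerivAt e (-(k * Real.sign (e s) * |e s| ^ α)) s := by
    intro s hs
    have h := (hx s hs).sub (hxd' s)
    have heq : a * x s + b * u s - deriv xd s
        = -(k * Real.sign (e s) * |e s| ^ α) := by
      rw [hu s hs]
      simp only [he_def]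
      field_simp
      ring
    rwa [heq] at h
  have hecont : ContinuousOn e (Ici 0) :=
    fun s hs => ((he s hs).continuousAt).continuousWithinAt
  -- Step A: once the error is zero it stays zero
  have stepA : ∀ s, 0 ≤ s → e s = 0 → ∀ r, s ≤ r → e r = 0 := by
    intro s hs hes r hsr
    have hr0 : (0:ℝ) ≤ r := le_trans hs hsr
    have hanti : AntitoneOn (fun τ => e τ ^ 2) (Ici 0) := by
      apply antitoneOn_of_deriv_nonpos (convex_Ici 0) (hecont.pow 2)
      · rw [interior_Ici]
        intro τ hτ
        exact (((he τ (le_of_lt hτ)).pow 2).differentiableAt).differentiableWithinAt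
      · rw [interior_Ici]
        intro τ hτ
        rw [((he τ (le_of_lt hτ)).pow 2).deriv]
        have habs : e τ * Real.sign (e τ) = |e τ| := by
          rcases lt_trichotomy (e τ) 0 with h | h | h
          · rw [Real.sign_of_neg h, abs_of_neg h]; ring
          · simp [h]
          · rw [Real.sign_of_pos h, abs_of_pos h]; ring
        have hpow : (0:ℝ) ≤ |e τ| ^ α := Real.rpow_nonneg (abs_nonneg _) _
        have : (2:ℕ) * e τ ^ (2 - 1) * -(k * Real.sign (e τ) * |e τ| ^ α)
            = -(2 * k * (|e τ| * |e τ| ^ α)) := by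
          push_cast
          rw [← habs]; ring
        rw [this]
        have : 0 ≤ |e τ| * |e τ| ^ α := mul_nonneg (abs_nonneg _) hpow
        nlinarith
    have h2 : e r ^ 2 ≤ e s ^ 2 := hanti hs hr0 hsr
    rw [hes] at h2
    nlinarith [sq_nonneg (e r)]
  -- Step B: the error reaches zero by time T
  have hex : ∃ s ∈ Icc (0:ℝ) T, e s = 0 := by
    by_contra hne
    push_neg at hne
    have he0 : e 0 ≠ 0 := hne 0 ⟨le_rfl, hT0⟩
    have habs0 : (0:ℝ) < |e 0| := abs_pos.mpr he0
    have hTpos : 0 < T := by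
      rw [hTdef]
      exact div_pos (Real.rpow_pos_of_pos habs0 _) hkα
    have hkT : |e 0| ^ (1 - α) = k * (1 - α) * T := by
      rw [hTdef]; field_simp; rfl
    rcases he0.lt_or_gt with hneg | hpos
    · -- e 0 < 0 : use f = -e
      have hepos : ∀ s ∈ Icc (0:ℝ) T, e s < 0 := by
        intro s hs
        by_contra h
        push_neg at h
        have hlt : 0 < e s := lt_of_le_of_ne h (fun h' => hne s hs h'.symm)
        have hsub : Icc (0:ℝ) s ⊆ Ici 0 := fun r hr => hr.1
        have hivt := intermediate_value_Icc hs.1 (hecont.mono hsub)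
        have h0mem : (0:ℝ) ∈ Icc (e 0) (e s) := ⟨hneg.le, hlt.le⟩
        obtain ⟨r, hr, hr0⟩ := hivt h0mem
        exact hne r ⟨hr.1, hr.2.trans hs.2⟩ hr0
      refine (stmt_13_aux k α T hk hα0 hα1 hTpos (fun τ => -e τ) ?_ ?_ ?_).elim
      · intro s hs
        have h := (he s hs.1).neg
        have hes := hepos s hs
        have : -(-(k * Real.sign (e s) * |e s| ^ α)) = -(k * (-e s) ^ α) := by
          rw [Real.sign_of_neg hes, abs_of_neg hes]; ring
        rwa [this] at h
      · intro s hs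
        have := hepos s hs
        show 0 < -e s
        linarith
      · show (-e 0) ^ (1 - α) = k * (1 - α) * T
        rw [abs_of_neg hneg] at hkT; exact hkT
    · -- e 0 > 0 : use f = e
      have hepos : ∀ s ∈ Icc (0:ℝ) T, 0 < e s := by
        intro s hs
        by_contra h
        push_neg at h
        have hlt : e s < 0 := lt_of_le_of_ne h (hne s hs)
        have hsub : Icc (0:ℝ) s ⊆ Ici 0 := fun r hr => hr.1
        have hivt := intermediate_value_Icc' hs.1 (hecont.mono hsub)
        have h0mem : (0:ℝ) ∈ Icc (e s) (e 0) := ⟨hlt.le, hpos.le⟩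
        obtain ⟨r, hr, hr0⟩ := hivt h0mem
        exact hne r ⟨hr.1, hr.2.trans hs.2⟩ hr0
      refine (stmt_13_aux k α T hk hα0 hα1 hTpos e ?_ hepos ?_).elim
      · intro s hs
        have h := he s hs.1
        have hes := hepos s hs
        have : -(k * Real.sign (e s) * |e s| ^ α) = -(k * e s ^ α) := by
          rw [Real.sign_of_pos hes, abs_of_pos hes]; ring
        rwa [this] at h
      · rw [abs_of_pos hpos] at hkT; exact hkT
  obtain ⟨s, hs, hes⟩ := hex
  have := stepA s hs.1 hes t (le_trans hs.2 ht)
  simpa [he_def, sub_eq_zero] using this
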